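/- Let H be a complex Hilbert space, (𝓐_λ)_{λ∈Λ} a net of weak-operator-topology closed unital subalgebras of B(H), and 𝓐 a subalgebra of B(H) such that every weak-operator-topology limit of a norm-bounded subnet (T_μ)_{μ∈Λ₀} with T_μ ∈ 𝓐_μ belongs to 𝓐. Then for all x, y ∈ H, limsup_{λ∈Λ} ‖ω_{x,y}|_{𝓐_λ}‖ ≤ ‖ω_{x,y}|_𝓐‖. -/

import Mathlib

open Filter

noncomputable section

variable {H : Type*} [NormedAddCommGroup H] [InnerProductSpace ℂ H] [CompleteSpace H]

/-- The weak operator topology on `B(H)`. -/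
def WOT (H : Type*) [NormedAddCommGroup H] [InnerProductSpace ℂ H] :
    TopologicalSpace (H →L[ℂ] H) :=
  TopologicalSpace.induced
    (fun T : H →L[ℂ] H => fun p : H × H => (inner ℂ (T p.1) p.2 : ℂ)) inferInstance

/-- `‖ω_{x,y}|_𝓐‖ = sup {|⟨Tx, y⟩| : T ∈ 𝓐, ‖T‖ ≤ 1}`. -/
def omegaNorm (𝓐 : Set (H →L[ℂ] H)) (x y : H) : ℝ :=
  sSup {r : ℝ | ∃ T ∈ 𝓐, ‖T‖ ≤ 1 ∧ r = ‖(inner ℂ (T x) y : ℂ)‖}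

/-- WOT limsup of a net of sets of operators: all WOT-limits of norm-bounded
subnets (subnets are encoded by nontrivial filters finer than `atTop`). -/
def wotLimsup {Λ : Type*} [Preorder Λ] (F : Λ → Set (H →L[ℂ] H)) :
    Set (H →L[ℂ] H) :=
  {A | ∃ (T : Λ → H →L[ℂ] H) (f : Filter Λ), f.NeBot ∧ f ≤ atTop ∧
      (∀ᶠ l in f, T l ∈ F l) ∧ (∃ C : ℝ, ∀ᶠ l in f, ‖T l‖ ≤ C) ∧
      Tendsto T f (@nhds _ (WOT H) A)}

/-- Along an ultrafilter, any net of operators in the closed unit ball has a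
WOT limit in the closed unit ball. -/
lemma exists_wot_ultrafilter_limit {Λ : Type*} (U : Ultrafilter Λ)
    (T : Λ → H →L[ℂ] H) (hT : ∀ l, ‖T l‖ ≤ 1) :
    ∃ A : H →L[ℂ] H, ‖A‖ ≤ 1 ∧ Tendsto T (U : Filter Λ) (@nhds _ (WOT H) A) ∧
      ∀ x y : H, Tendsto (fun l => (inner ℂ (T l x) y : ℂ)) (U : Filter Λ)
        (nhds (inner ℂ (A x) y)) := by
  have key : ∀ x y : H, ∃ c : ℂ,
      Tendsto (fun l => (inner ℂ (T l x) y : ℂ)) (U : Filter Λ) (nhds c) := by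
    intro x y
    have hmem : ∀ l, (inner ℂ (T l x) y : ℂ) ∈ Metric.closedBall (0 : ℂ) (‖x‖ * ‖y‖) := by
      intro l
      rw [Metric.mem_closedBall, dist_zero_right]
      calc ‖(inner ℂ (T l x) y : ℂ)‖ ≤ ‖T l x‖ * ‖y‖ := norm_inner_le_norm _ _
        _ ≤ ‖x‖ * ‖y‖ := by
            have h1 : ‖T l x‖ ≤ ‖x‖ := by
              calc ‖T l x‖ ≤ ‖T l‖ * ‖x‖ := (T l).le_opNorm x
                _ ≤ 1 * ‖x‖ := mul_le_mul_of_nonneg_right (hT l) (norm_nonneg x)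
                _ = ‖x‖ := one_mul _
            exact mul_le_mul_of_nonneg_right h1 (norm_nonneg y)
    have hcompact : IsCompact (Metric.closedBall (0 : ℂ) (‖x‖ * ‖y‖)) :=
      isCompact_closedBall _ _
    have hle : ↑(U.map (fun l => (inner ℂ (T l x) y : ℂ))) ≤
        𝓟 (Metric.closedBall (0 : ℂ) (‖x‖ * ‖y‖)) :=
      le_principal_iff.2 (mem_map.2 (Eventually.of_forall hmem))
    obtain ⟨c, _, hc⟩ := hcompact.ultrafilter_le_nhds
      (U.map (fun l => (inner ℂ (T l x) y : ℂ))) hle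
    exact ⟨c, hc⟩
  choose φ hφ using key
  -- norm bound for φ
  have hφnorm : ∀ x y : H, ‖φ x y‖ ≤ ‖x‖ * ‖y‖ := by
    intro x y
    refine le_of_tendsto (hφ x y).norm (Eventually.of_forall fun l => ?_)
    calc ‖(inner ℂ (T l x) y : ℂ)‖ ≤ ‖T l x‖ * ‖y‖ := norm_inner_le_norm _ _
      _ ≤ ‖x‖ * ‖y‖ := by
          have h1 : ‖T l x‖ ≤ ‖x‖ := by
            calc ‖T l x‖ ≤ ‖T l‖ * ‖x‖ := (T l).le_opNorm x
              _ ≤ 1 * ‖x‖ := mul_le_mul_of_nonneg_right (hT l) (norm_nonneg x)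
              _ = ‖x‖ := one_mul _
          exact mul_le_mul_of_nonneg_right h1 (norm_nonneg y)
  -- the functional y ↦ φ x y
  have Llin : ∀ x : H, ∃ L : H →L[ℂ] ℂ, (∀ y, L y = φ x y) ∧ ‖L‖ ≤ ‖x‖ := by
    intro x
    have hadd : ∀ y y' : H, φ x (y + y') = φ x y + φ x y' := by
      intro y y'
      refine tendsto_nhds_unique (hφ x (y + y')) ?_
      exact (((hφ x y).add (hφ x y')).congr fun l => (inner_add_right _ _ _).symm)
    have hsmul : ∀ (c : ℂ) (y : H), φ x (c • y) = c * φ x y := by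
      intro c y
      refine tendsto_nhds_unique (hφ x (c • y)) ?_
      exact (((hφ x y).const_mul c).congr fun l => (inner_smul_right _ _ _).symm)
    let Lm : H →ₗ[ℂ] ℂ :=
      { toFun := φ x, map_add' := hadd, map_smul' := hsmul }
    refine ⟨LinearMap.mkContinuous Lm ‖x‖ fun y => hφnorm x y, fun y => rfl, ?_⟩
    exact LinearMap.mkContinuous_norm_le _ (norm_nonneg x) _
  choose L hL hLnorm using Llin
  -- the vector w x representing the functional
  set w : H → H := fun x => (InnerProductSpace.toDual ℂ H).symm (L x) with hw
  have hw_inner : ∀ x y : H, (inner ℂ (w x) y : ℂ) = φ x y := by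
    intro x y
    rw [hw]
    rw [InnerProductSpace.toDual_symm_apply]
    exact hL x y
  have hwnorm : ∀ x : H, ‖w x‖ ≤ ‖x‖ := by
    intro x
    rw [hw]
    simpa using hLnorm x
  have hwadd : ∀ x x' : H, w (x + x') = w x + w x' := by
    intro x x'
    refine ext_inner_right ℂ fun v => ?_
    rw [inner_add_left, hw_inner, hw_inner, hw_inner]
    refine tendsto_nhds_unique (hφ (x + x') v) ?_
    refine ((hφ x v).add (hφ x' v)).congr fun l => ?_
    rw [← inner_add_left, ← map_add]
  have hwsmul : ∀ (c : ℂ) (x : H), w (c • x) = c • w x := by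
    intro c x
    refine ext_inner_right ℂ fun v => ?_
    rw [inner_smul_left, hw_inner, hw_inner]
    refine tendsto_nhds_unique (hφ (c • x) v) ?_
    refine ((hφ x v).const_mul (starRingEnd ℂ c)).congr fun l => ?_
    rw [map_smul, inner_smul_left]
  let Am : H →ₗ[ℂ] H := { toFun := w, map_add' := hwadd, map_smul' := hwsmul }
  let A : H →L[ℂ] H := LinearMap.mkContinuous Am 1 fun v => by
    show ‖w v‖ ≤ 1 * ‖v‖
    simpa using hwnorm v
  have hAapp : ∀ x : H, A x = w x := fun x => rfl
  have hAin : ∀ x y : H, (inner ℂ (A x) y : ℂ) = φ x y := by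
    intro x y; rw [hAapp, hw_inner]
  refine ⟨A, LinearMap.mkContinuous_norm_le _ zero_le_one _, ?_, ?_⟩
  · rw [WOT, nhds_induced, tendsto_comap_iff]
    rw [tendsto_pi_nhds]
    intro p
    rw [hAin]
    exact hφ p.1 p.2
  · intro x y; rw [hAin]; exact hφ x y

lemma omegaNorm_set_nonempty (𝓐 : Subalgebra ℂ (H →L[ℂ] H)) (x y : H) :
    {r : ℝ | ∃ T ∈ (𝓐 : Set (H →L[ℂ] H)), ‖T‖ ≤ 1 ∧ r = ‖(inner ℂ (T x) y : ℂ)‖}.Nonempty :=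
  ⟨0, 0, zero_mem 𝓐, by simp, by simp⟩

lemma omegaNorm_set_bddAbove (𝓐 : Subalgebra ℂ (H →L[ℂ] H)) (x y : H) :
    BddAbove {r : ℝ | ∃ T ∈ (𝓐 : Set (H →L[ℂ] H)), ‖T‖ ≤ 1 ∧ r = ‖(inner ℂ (T x) y : ℂ)‖} := by
  refine ⟨‖x‖ * ‖y‖, ?_⟩
  rintro r ⟨T, _, hTn, rfl⟩
  calc ‖(inner ℂ (T x) y : ℂ)‖ ≤ ‖T x‖ * ‖y‖ := norm_inner_le_norm _ _
    _ ≤ ‖x‖ * ‖y‖ := by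
        have h1 : ‖T x‖ ≤ ‖x‖ := by
          calc ‖T x‖ ≤ ‖T‖ * ‖x‖ := T.le_opNorm x
            _ ≤ 1 * ‖x‖ := mul_le_mul_of_nonneg_right hTn (norm_nonneg x)
            _ = ‖x‖ := one_mul _
        exact mul_le_mul_of_nonneg_right h1 (norm_nonneg y)

/-- If every WOT limit of a norm-bounded subnet chosen from the
net of WOT-closed unital subalgebras `𝓐l` of `B(H)` lies in the subalgebra `𝓐`,
then `limsup_λ ‖ω_{x,y}|_{𝓐_λ}‖ ≤ ‖ω_{x,y}|_𝓐‖` for all `x y : H`. -/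
theorem norms_of_vector_functionals_stmt1
    {Λ : Type*} [Nonempty Λ] [Preorder Λ] [IsDirected Λ (· ≤ ·)]
    (𝓐l : Λ → Subalgebra ℂ (H →L[ℂ] H)) (𝓐 : Subalgebra ℂ (H →L[ℂ] H))
    (hclosed : ∀ l, @IsClosed _ (WOT H) (𝓐l l : Set (H →L[ℂ] H)))
    (hlim : wotLimsup (fun l => (𝓐l l : Set (H →L[ℂ] H))) ⊆ (𝓐 : Set (H →L[ℂ] H)))
    (x y : H) :
    Filter.limsup (fun l => omegaNorm (𝓐l l : Set (H →L[ℂ] H)) x y) Filter.atTop ≤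
      omegaNorm (𝓐 : Set (H →L[ℂ] H)) x y := by
  set f : Λ → ℝ := fun l => omegaNorm (𝓐l l : Set (H →L[ℂ] H)) x y with hf
  by_contra hcon
  rw [not_le] at hcon
  set M : ℝ := omegaNorm (𝓐 : Set (H →L[ℂ] H)) x y with hM
  -- f is nonneg
  have hf0 : ∀ l, 0 ≤ f l := fun l =>
    le_csSup (omegaNorm_set_bddAbove _ x y) ⟨0, zero_mem _, by simp, by simp⟩
  have hcobdd : IsCoboundedUnder (· ≤ ·) (atTop : Filter Λ) f :=
    isCoboundedUnder_le_of_le _ hf0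
  obtain ⟨a, haM, halt⟩ := exists_between hcon
  have hfreq : ∃ᶠ l in (atTop : Filter Λ), a < f l :=
    frequently_lt_of_lt_limsup hcobdd halt
  -- select operators
  have hsel : ∀ l, ∃ T : H →L[ℂ] H, T ∈ 𝓐l l ∧ ‖T‖ ≤ 1 ∧
      (a < f l → a < ‖(inner ℂ (T x) y : ℂ)‖) := by
    intro l
    by_cases h : a < f l
    · obtain ⟨r, hr, har⟩ := exists_lt_of_lt_csSup (omegaNorm_set_nonempty (𝓐l l) x y) h
      obtain ⟨T, hTm, hTn, rfl⟩ := hr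
      exact ⟨T, hTm, hTn, fun _ => har⟩
    · exact ⟨0, zero_mem _, by simp, fun h' => absurd h' h⟩
  choose T hTmem hTnorm hTbig using hsel
  -- the subnet filter
  set f0 : Filter Λ := atTop ⊓ 𝓟 {l | a < f l} with hf0def
  have hne : f0.NeBot := frequently_iff_neBot.mp hfreq
  set U : Ultrafilter Λ := Ultrafilter.of f0 with hU
  have hUle : (U : Filter Λ) ≤ f0 := Ultrafilter.of_le f0
  have hUatTop : (U : Filter Λ) ≤ atTop := hUle.trans inf_le_left
  obtain ⟨A, hAnorm, hAtend, hAinner⟩ := exists_wot_ultrafilter_limit U T hTnorm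
  have hAmem : A ∈ (𝓐 : Set (H →L[ℂ] H)) := by
    refine hlim ⟨T, (U : Filter Λ), U.neBot, hUatTop, Eventually.of_forall hTmem,
      ⟨1, Eventually.of_forall hTnorm⟩, hAtend⟩
  -- a ≤ |⟨Ax, y⟩|
  have hev : ∀ᶠ l in (U : Filter Λ), a < ‖(inner ℂ (T l x) y : ℂ)‖ := by
    have : ∀ᶠ l in (U : Filter Λ), a < f l :=
      hUle.trans inf_le_right (mem_principal_self _)
    exact this.mono fun l hl => hTbig l hl
  have haA : a ≤ ‖(inner ℂ (A x) y : ℂ)‖ :=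
    ge_of_tendsto (hAinner x y).norm (hev.mono fun l hl => hl.le)
  have hAle : ‖(inner ℂ (A x) y : ℂ)‖ ≤ M :=
    le_csSup (omegaNorm_set_bddAbove 𝓐 x y) ⟨A, hAmem, hAnorm, rfl⟩
  exact absurd (haM.trans_le (haA.trans hAle)) (lt_irrefl M)
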